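/- Let n ≥ 2, fix σ'(0) > 0 and training inputs x₁,…,x_n ∈ ℝ^{p₁}, and define Λ : ℝⁿ → ℝ by Λ(y) = σ'(0) · max_{k=1,…,p₁} |∑_{i=1}^n x_{i,k}(yᵢ − ȳ)| / ‖y − ȳ·1‖₂ for y ≠ ȳ·1 (where ȳ = (1/n)∑ᵢ yᵢ and 1 is the all-ones vector), and Λ(y) = 0 for y = ȳ·1. For b ∈ ℝ and ξ > 0, let P_{b,ξ} be the product on ℝⁿ of n independent N(b, ξ²) Gaussian distributions. Then the pushforward of P_{b,ξ} under Λ (the law of the statistic Λ(Y) for Y ~ P_{b,ξ}) is the same for all b ∈ ℝ and ξ > 0. -/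

import Mathlib

open MeasureTheory ProbabilityTheory

/-- The statistic `Λ(y) = σ'(0) · max_k |∑ᵢ x_{i,k}(yᵢ − ȳ)| / ‖y − ȳ·1‖₂`
(with `ȳ = (1/n)∑ᵢ yᵢ`; for `p₁ > 0` the `⨆` over `Fin p₁` is the maximum over
`k = 1,…,p₁`).  When `y = ȳ·1` both the numerator sums and the denominator vanish
and, by the division-by-zero convention, `Λ(y) = 0`, matching the piecewise
definition. -/
noncomputable def lamStat (n p₁ : ℕ) (s : ℝ) (x : Fin n → Fin p₁ → ℝ)
    (y : Fin n → ℝ) : ℝ :=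
  s * (⨆ k : Fin p₁, |∑ i, x i k * (y i - (∑ j, y j) / n)|) /
    Real.sqrt (∑ i, (y i - (∑ j, y j) / n) ^ 2)

lemma gauss_affine (b ξ : ℝ) (hξ : 0 < ξ) :
    (gaussianReal 0 1).map (fun y => ξ * y + b) = gaussianReal b ⟨ξ ^ 2, sq_nonneg ξ⟩ := by
  have h : (fun y : ℝ => ξ * y + b) = (fun y => y + b) ∘ (fun y => ξ * y) := rfl
  rw [h, ← Measure.map_map (measurable_id'.add_const _) (measurable_id'.const_mul _)]
  rw [gaussianReal_map_const_mul, gaussianReal_map_add_const]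
  norm_num
  rfl

lemma lamStat_measurable (n p₁ : ℕ) (hp₁ : 0 < p₁) (s : ℝ) (x : Fin n → Fin p₁ → ℝ) :
    Measurable (lamStat n p₁ s x) := by
  have : Nonempty (Fin p₁) := ⟨⟨0, hp₁⟩⟩
  have hnum : Measurable fun y : Fin n → ℝ =>
      ⨆ k : Fin p₁, |∑ i, x i k * (y i - (∑ j, y j) / n)| := by
    have := Finset.measurable_sup' (α := ℝ) (s := (Finset.univ : Finset (Fin p₁)))
      Finset.univ_nonempty (f := fun k (y : Fin n → ℝ) =>
        |∑ i, x i k * (y i - (∑ j, y j) / n)|) (by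
          intro k _
          apply Measurable.abs
          apply Finset.measurable_sum
          intro i _
          exact (((measurable_pi_apply i).sub ((Finset.measurable_sum _
            (fun j _ => measurable_pi_apply j)).div_const _)).const_mul _))
    convert this using 1
    funext y
    rw [← Finset.sup'_univ_eq_ciSup]
    simp [Finset.sup'_apply]
  apply Measurable.div
  · exact hnum.const_mul s
  · apply Measurable.sqrt
    apply Finset.measurable_sum
    intro i _
    exact ((measurable_pi_apply i).sub ((Finset.measurable_sum _
      (fun j _ => measurable_pi_apply j)).div_const _)).pow_const 2

lemma lamStat_affine (n p₁ : ℕ) (hn : 2 ≤ n) (s : ℝ) (x : Fin n → Fin p₁ → ℝ)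
    (b ξ : ℝ) (hξ : 0 < ξ) (y : Fin n → ℝ) :
    lamStat n p₁ s x (fun i => ξ * y i + b) = lamStat n p₁ s x y := by
  have hn' : (n : ℝ) ≠ 0 := by positivity
  have hmean : (∑ j, (ξ * y j + b)) / n = ξ * ((∑ j, y j) / n) + b := by
    rw [Finset.sum_add_distrib, Finset.sum_const, Finset.card_univ, Fintype.card_fin, ← Finset.mul_sum]
    field_simp
    ring
  have hdev : ∀ i, (ξ * y i + b) - (∑ j, (ξ * y j + b)) / n
      = ξ * (y i - (∑ j, y j) / n) := by
    intro i; rw [hmean]; ring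
  unfold lamStat
  simp only [hdev]
  have h1 : ∀ k : Fin p₁, |∑ i, x i k * (ξ * (y i - (∑ j, y j) / n))|
      = ξ * |∑ i, x i k * (y i - (∑ j, y j) / n)| := by
    intro k
    rw [show (∑ i, x i k * (ξ * (y i - (∑ j, y j) / n)))
        = ξ * ∑ i, x i k * (y i - (∑ j, y j) / n) by rw [Finset.mul_sum]; congr 1; ext i; ring,
      abs_mul, abs_of_pos hξ]
  simp only [h1]
  rw [← Real.mul_iSup_of_nonneg hξ.le]
  have h2 : (∑ i, (ξ * (y i - (∑ j, y j) / n)) ^ 2)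
      = ξ ^ 2 * ∑ i, (y i - (∑ j, y j) / n) ^ 2 := by
    rw [Finset.mul_sum]; congr 1; ext i; ring
  rw [h2, Real.sqrt_mul (sq_nonneg ξ), Real.sqrt_sq hξ.le,
    show s * (ξ * ⨆ k, |∑ i, x i k * (y i - (∑ j, y j) / n)|)
      = ξ * (s * ⨆ k, |∑ i, x i k * (y i - (∑ j, y j) / n)|) by ring,
    mul_div_mul_left _ _ hξ.ne']

/-- the statistic `Λ` is pivotal: for `n ≥ 2`, its law under the
product of `n` independent `N(b, ξ²)` Gaussians is the same for all `b ∈ ℝ` and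
`ξ > 0`. -/
theorem lamStat_pushforward_pivotal
    (n p₁ : ℕ) (hn : 2 ≤ n) (hp₁ : 0 < p₁)
    (s : ℝ) (hs : 0 < s) (x : Fin n → Fin p₁ → ℝ)
    (b₁ ξ₁ b₂ ξ₂ : ℝ) (hξ₁ : 0 < ξ₁) (hξ₂ : 0 < ξ₂) :
    (Measure.pi fun _ : Fin n =>
        gaussianReal b₁ ⟨ξ₁ ^ 2, sq_nonneg ξ₁⟩).map (lamStat n p₁ s x)
      = (Measure.pi fun _ : Fin n =>
        gaussianReal b₂ ⟨ξ₂ ^ 2, sq_nonneg ξ₂⟩).map (lamStat n p₁ s x) := by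
  have key : ∀ b ξ : ℝ, 0 < ξ →
      (Measure.pi fun _ : Fin n =>
        gaussianReal b ⟨ξ ^ 2, sq_nonneg ξ⟩).map (lamStat n p₁ s x)
      = (Measure.pi fun _ : Fin n => gaussianReal 0 1).map (lamStat n p₁ s x) := by
    intro b ξ hξ
    haveI : ∀ i : Fin n, SigmaFinite (gaussianReal b ⟨ξ ^ 2, sq_nonneg ξ⟩) := fun _ =>
      haveI := instIsProbabilityMeasureGaussianReal b ⟨ξ ^ 2, sq_nonneg ξ⟩; inferInstance
    have hF : MeasurePreserving (fun (a : Fin n → ℝ) i => ξ * a i + b)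
        (Measure.pi fun _ : Fin n => gaussianReal 0 1)
        (Measure.pi fun _ : Fin n => gaussianReal b ⟨ξ ^ 2, sq_nonneg ξ⟩) :=
      measurePreserving_pi (fun _ => gaussianReal 0 1) (fun _ => gaussianReal b ⟨ξ ^ 2, sq_nonneg ξ⟩) (hν := this) (fun _ =>
        ⟨(measurable_id'.const_mul _).add_const _, gauss_affine b ξ hξ⟩)
    rw [← hF.map_eq, Measure.map_map (lamStat_measurable n p₁ hp₁ s x) hF.measurable]
    congr 1
    funext a
    exact lamStat_affine n p₁ hn s x b ξ hξ a
  rw [key b₁ ξ₁ hξ₁, key b₂ ξ₂ hξ₂]
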